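/- Let p be an odd prime not dividing a, f(x) = a x^2 + b x + c with D = b^2 - 4ac, v_p(D) even, (D_p/p) = 1 where D_p = D/p^{v_p(D)}, and e > v_p(D). Then the congruence f(x) ≡ 0 (mod p^e) has exactly 2·p^{v_p(D)/2} solutions in [1, p^e]. -/

import Mathlib

lemma aux_not_dvd_of_sq {p : ℕ} (hp : p.Prime) {d s : ℤ} (hpd : ¬ (p:ℤ) ∣ d) {m : ℕ} (hm : 1 ≤ m)
    (hs : (p:ℤ)^m ∣ s^2 - d) : ¬ (p:ℤ) ∣ s := by
  intro h
  have h1 : (p:ℤ) ∣ s^2 - d := dvd_trans (dvd_pow_self _ (by omega : m ≠ 0)) hs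
  have h2 : (p:ℤ) ∣ s^2 := dvd_pow h (by norm_num)
  exact hpd (by have := dvd_sub h2 h1; simpa using this)

lemma aux_sqrt_lift {p : ℕ} (hp : p.Prime) (hp2 : ¬ (p:ℤ) ∣ 2) {d : ℤ} (hpd : ¬ (p:ℤ) ∣ d)
    (h1 : ∃ s : ℤ, (p:ℤ) ∣ s^2 - d) : ∀ m : ℕ, 1 ≤ m → ∃ s : ℤ, (p:ℤ)^m ∣ s^2 - d := by
  intro m
  induction m with
  | zero => omega
  | succ m ih =>
    intro _
    by_cases h : m = 0
    · obtain ⟨s, hs⟩ := h1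
      exact ⟨s, by rw [h, pow_one]; exact hs⟩
    · have hm : 1 ≤ m := by omega
      obtain ⟨s, hs⟩ := ih hm
      have hps : ¬ (p:ℤ) ∣ s := aux_not_dvd_of_sq hp hpd hm hs
      haveI : Fact p.Prime := ⟨hp⟩
      have hg : ((2*s : ℤ) : ZMod p) ≠ 0 := by
        rw [Ne, ZMod.intCast_zmod_eq_zero_iff_dvd]
        intro hdvd
        rcases (Nat.prime_iff_prime_int.1 hp).dvd_mul.1 hdvd with h' | h' <;> [exact hp2 h'; exact hps h']
      obtain ⟨u, hu⟩ := hs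
      set t : ℤ := ((((-u : ℤ) : ZMod p) * (((2*s : ℤ) : ZMod p))⁻¹).val : ℤ) with ht
      have hkey : (p:ℤ) ∣ 2*s*t + u := by
        rw [← ZMod.intCast_zmod_eq_zero_iff_dvd]
        push_cast [ht, ZMod.natCast_val, ZMod.intCast_cast, ZMod.cast_id]
        have hg' : (2*(s:ZMod p)) ≠ 0 := by push_cast at hg; exact hg
        field_simp
        have hs0 : (s:ZMod p) ≠ 0 := right_ne_zero_of_mul hg'
        have h20 : (2:ZMod p) ≠ 0 := left_ne_zero_of_mul hg'
        simp [hs0, h20]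
      refine ⟨s + (p:ℤ)^m * t, ?_⟩
      have hexp : ((p:ℤ))^(m+1) = (p:ℤ)^m * (p:ℤ) := by ring
      rw [hexp]
      have : (s + (p:ℤ)^m * t)^2 - d = (p:ℤ)^m * (u + 2*s*t + (p:ℤ)^m * t^2) := by
        have h2m : (p:ℤ)^m * (p:ℤ)^m = (p:ℤ)^(m+m) := by rw [← pow_add]
        rw [mul_add, mul_add, ← hu]; ring
      rw [this]
      refine mul_dvd_mul_left _ ?_
      have : (p:ℤ) ∣ (p:ℤ)^m * t^2 := Dvd.dvd.mul_right (dvd_pow_self _ (by omega)) _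
      have := dvd_add hkey this
      convert this using 1; ring

lemma aux_two_sols {p : ℕ} (hp : p.Prime) (hp2 : ¬ (p:ℤ) ∣ 2) {d : ℤ} (hpd : ¬ (p:ℤ) ∣ d)
    {m : ℕ} (hm : 1 ≤ m) {s u : ℤ} (hs : (p:ℤ)^m ∣ s^2 - d) (hu : (p:ℤ)^m ∣ u^2 - d) :
    (p:ℤ)^m ∣ u - s ∨ (p:ℤ)^m ∣ u + s := by
  have hpZ : Prime (p:ℤ) := Nat.prime_iff_prime_int.1 hp
  have hps : ¬ (p:ℤ) ∣ s := aux_not_dvd_of_sq hp hpd hm hs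
  have hdiff : (p:ℤ)^m ∣ (u - s) * (u + s) := by
    have := dvd_sub hu hs
    rw [show (u - s) * (u + s) = u^2 - d - (s^2 - d) by ring]; exact this
  have hnot2 : ¬ ((p:ℤ) ∣ u - s ∧ (p:ℤ) ∣ u + s) := by
    rintro ⟨h1, h2⟩
    have : (p:ℤ) ∣ 2*s := by have := dvd_sub h2 h1; rw [show 2*s = u + s - (u - s) by ring]; exact this
    rcases hpZ.dvd_mul.1 this with h' | h' <;> [exact hp2 h'; exact hps h']
  by_cases hc : (p:ℤ) ∣ u + s
  · right
    have hcop : IsCoprime ((p:ℤ)^m) (u - s) :=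
      IsCoprime.pow_left ((hpZ.coprime_iff_not_dvd).2 (fun h => hnot2 ⟨h, hc⟩))
    exact hcop.dvd_of_dvd_mul_left hdiff
  · left
    have hcop : IsCoprime ((p:ℤ)^m) (u + s) :=
      IsCoprime.pow_left ((hpZ.coprime_iff_not_dvd).2 hc)
    exact hcop.dvd_of_dvd_mul_right hdiff

/-- Let `p` be an odd prime with `p ∤ a`, `D = b² - 4ac`, `v = v_p(D)` even,
`D_p = D/pᵛ` a quadratic residue mod `p`, and `e > v`. Then
`f(x) ≡ 0 (mod pᵉ)` has exactly `2·p^{v/2}` solutions in `[1, pᵉ]`. -/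
theorem count_solutions_large_e (a b c : ℤ) (p : ℕ) (hp : p.Prime) (hodd : p ≠ 2)
    (hpa : ¬ (p : ℤ) ∣ a) (v e : ℕ)
    (hv : (p : ℤ)^v ∣ (b^2 - 4*a*c)) (hv' : ¬ (p : ℤ)^(v+1) ∣ (b^2 - 4*a*c))
    (hveven : Even v)
    (hres : IsSquare ((((b^2 - 4*a*c) / (p : ℤ)^v : ℤ) : ZMod p)))
    (he : v < e) :
    {x : ℤ | 1 ≤ x ∧ x ≤ (p : ℤ)^e ∧
      (p : ℤ)^e ∣ (a*x^2 + b*x + c)}.ncard = 2 * p^(v/2) := by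
  have hpZ : Prime (p:ℤ) := Nat.prime_iff_prime_int.1 hp
  have hppos : (0:ℤ) < (p:ℤ):= by exact_mod_cast hp.pos
  have hp2 : ¬ (p:ℤ) ∣ 2 := by
    intro h
    have h2 : p ∣ 2 := by exact_mod_cast h
    exact hodd ((Nat.prime_dvd_prime_iff_eq hp Nat.prime_two).1 h2)
  haveI : Fact p.Prime := ⟨hp⟩
  obtain ⟨k, hk⟩ := hveven
  obtain ⟨m, hm1, hm⟩ : ∃ m, 1 ≤ m ∧ e = v + m := ⟨e - v, by omega, by omega⟩
  subst hm; subst hk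
  set D : ℤ := b^2 - 4*a*c with hDdef
  set d : ℤ := D / (p:ℤ)^(k+k) with hd
  have hDd : (p:ℤ)^(k+k) * d = D := by
    rw [hd, mul_comm]; exact Int.ediv_mul_cancel hv
  have hpd : ¬ (p:ℤ) ∣ d := by
    intro h
    obtain ⟨t, ht⟩ := h
    refine hv' ⟨t, ?_⟩
    rw [← hDd, ht, pow_succ]; ring
  -- existence of square root mod p
  have h1 : ∃ s : ℤ, (p:ℤ) ∣ s^2 - d := by
    obtain ⟨r, hr⟩ := hres
    refine ⟨(r.val : ℤ), ?_⟩
    rw [← ZMod.intCast_zmod_eq_zero_iff_dvd]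
    push_cast [ZMod.natCast_val, ZMod.intCast_cast, ZMod.cast_id]
    rw [sq, ← hr, sub_self]
  obtain ⟨z0, hz0⟩ := aux_sqrt_lift hp hp2 hpd h1 m hm1
  have hpz0 : ¬ (p:ℤ) ∣ z0 := aux_not_dvd_of_sq hp hpd hm1 hz0
  set N : ℤ := (p:ℤ)^((k+k)+m) with hN
  set n : ℕ := p^((k+k)+m) with hn
  haveI : NeZero n := ⟨pow_ne_zero _ hp.pos.ne'⟩
  have hnN : (n:ℤ) = N := by rw [hn, hN]; push_cast; ring
  have castdvd : ∀ z : ℤ, ((z : ZMod n) = 0 ↔ N ∣ z) := by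
    intro z; rw [ZMod.intCast_zmod_eq_zero_iff_dvd, hnN]
  have castY : ∀ y : ZMod n, ((y.val : ℤ) : ZMod n) = y := by
    intro y; push_cast [ZMod.natCast_val, ZMod.cast_id]; ring
  have casteq : ∀ z w : ℤ, ((z : ZMod n) = (w : ZMod n)) ↔ N ∣ z - w := by
    intro z w
    constructor
    · intro h
      have h2 := (ZMod.intCast_eq_intCast_iff _ _ _).1 h
      have hdvd := Int.ModEq.dvd h2
      rw [hnN] at hdvd
      rw [show z - w = -(w - z) by ring]
      exact dvd_neg.2 hdvd
    · intro h
      rw [ZMod.intCast_eq_intCast_iff]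
      have : (n:ℤ) ∣ z - w := by rw [hnN]; exact h
      exact (Int.modEq_iff_dvd.2 (by rw [show w - z = -(z-w) by ring]; exact dvd_neg.2 this))
  classical
  -- Step A : the set is a finset
  rw [show {x : ℤ | 1 ≤ x ∧ x ≤ N ∧ N ∣ (a*x^2 + b*x + c)}
      = ((Finset.Ioc 0 N).filter (fun x => N ∣ (a*x^2 + b*x + c)) : Finset ℤ) from by
    ext x
    simp only [Set.mem_setOf_eq, Finset.coe_filter, Finset.mem_Ioc]
    constructor
    · rintro ⟨h1, h2, h3⟩; exact ⟨⟨by omega, h2⟩, h3⟩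
    · rintro ⟨⟨h1, h2⟩, h3⟩; exact ⟨by omega, h2, h3⟩, Set.ncard_coe_finset]
  set F : Finset ℤ := (Finset.Ioc 0 N).filter (fun x => N ∣ (a*x^2 + b*x + c)) with hF
  set t1 : Finset (ZMod n) :=
    Finset.univ.filter (fun x : ZMod n => (a : ZMod n)*x^2 + (b : ZMod n)*x + (c : ZMod n) = 0) with ht1
  set t2 : Finset (ZMod n) := Finset.univ.filter (fun y : ZMod n => y^2 = ((D : ℤ) : ZMod n)) with ht2
  have hNpos : (0:ℤ) < N := by rw [hN]; positivity
  -- Step B : F.card = t1.card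
  have hstep1 : F.card = t1.card := by
    refine Finset.card_bij (fun x _ => ((x : ℤ) : ZMod n)) ?_ ?_ ?_
    · intro x hx
      rw [hF, Finset.mem_filter, Finset.mem_Ioc] at hx
      rw [ht1, Finset.mem_filter]
      refine ⟨Finset.mem_univ _, ?_⟩
      have h2 := (castdvd (a*x^2 + b*x + c)).2 hx.2
      push_cast at h2
      exact h2
    · intro x hx x' hx' hxx
      rw [hF, Finset.mem_filter, Finset.mem_Ioc] at hx hx'
      have hdvd := (casteq x x').1 hxx
      have hz : x - x' = 0 := Int.eq_zero_of_abs_lt_dvd hdvd (by rw [abs_lt]; omega)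
      omega
    · intro y hy
      rw [ht1, Finset.mem_filter] at hy
      by_cases h0 : y = 0
      · refine ⟨N, ?_, ?_⟩
        · rw [hF, Finset.mem_filter, Finset.mem_Ioc]
          refine ⟨⟨hNpos, le_refl _⟩, ?_⟩
          rw [← castdvd]
          have hN0 : ((N : ℤ) : ZMod n) = 0 := (castdvd N).2 dvd_rfl
          push_cast [hN0]
          subst h0
          simpa using hy.2
        · show ((N : ℤ) : ZMod n) = y
          rw [h0]; exact (castdvd N).2 dvd_rfl
      · refine ⟨(y.val : ℤ), ?_, castY y⟩
        rw [hF, Finset.mem_filter, Finset.mem_Ioc]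
        have hvne : y.val ≠ 0 := fun h => h0 ((ZMod.val_eq_zero y).1 h)
        have hvlt : (y.val : ℤ) < N := by
          rw [← hnN]; exact_mod_cast ZMod.val_lt y
        refine ⟨⟨by exact_mod_cast Nat.pos_of_ne_zero hvne, le_of_lt hvlt⟩, ?_⟩
        rw [← castdvd]
        push_cast [ZMod.natCast_val, ZMod.cast_id]
        exact hy.2
  -- units
  have hpdvd2a : ¬ (p:ℤ) ∣ 2*a := by
    intro h; rcases hpZ.dvd_mul.1 h with h' | h'; exacts [hp2 h', hpa h']
  have hpdvd4a : ¬ (p:ℤ) ∣ 4*a := by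
    intro h
    rcases hpZ.dvd_mul.1 h with h' | h'
    · rcases hpZ.dvd_mul.1 (show (p:ℤ) ∣ 2*2 by norm_num at h' ⊢; exact h') with h'' | h'' <;>
        exact hp2 h''
    · exact hpa h'
  obtain ⟨u2, w2, hu2⟩ := (IsCoprime.pow_left ((hpZ.coprime_iff_not_dvd).2 hpdvd2a) :
    IsCoprime ((p:ℤ)^((k+k)+m)) (2*a))
  obtain ⟨u4, w4, hu4⟩ := (IsCoprime.pow_left ((hpZ.coprime_iff_not_dvd).2 hpdvd4a) :
    IsCoprime ((p:ℤ)^((k+k)+m)) (4*a))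
  have hpn0 : (((p:ℤ)^((k+k)+m) : ℤ) : ZMod n) = 0 := by
    rw [← hN]; exact (castdvd N).2 dvd_rfl
  have hinv2 : (w2 : ZMod n) * (2 * (a : ZMod n)) = 1 := by
    have h := congrArg (fun z : ℤ => (z : ZMod n)) hu2
    push_cast at h
    push_cast at hpn0
    rw [hpn0, mul_zero, zero_add] at h
    exact h
  have hinv4 : (w4 : ZMod n) * (4 * (a : ZMod n)) = 1 := by
    have h := congrArg (fun z : ℤ => (z : ZMod n)) hu4
    push_cast at h
    push_cast at hpn0
    rw [hpn0, mul_zero, zero_add] at h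
    exact h
  have hDcast : ((D : ℤ) : ZMod n) = (b : ZMod n)^2 - 4*(a : ZMod n)*(c : ZMod n) := by
    rw [hDdef]; push_cast; ring
  -- Step C : t1.card = t2.card
  have hstep2 : t1.card = t2.card := by
    refine Finset.card_bij (fun x _ => 2*(a : ZMod n)*x + (b : ZMod n)) ?_ ?_ ?_
    · intro x hx
      rw [ht1, Finset.mem_filter] at hx
      rw [ht2, Finset.mem_filter]
      refine ⟨Finset.mem_univ _, ?_⟩
      rw [hDcast]
      linear_combination (4*(a : ZMod n)) * hx.2
    · intro x hx x' hx' hxx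
      have h : 2*(a : ZMod n)*x = 2*(a : ZMod n)*x' := by linear_combination hxx
      calc x = (w2 : ZMod n) * (2*(a : ZMod n)*x) := by rw [← mul_assoc, hinv2, one_mul]
        _ = (w2 : ZMod n) * (2*(a : ZMod n)*x') := by rw [h]
        _ = x' := by rw [← mul_assoc, hinv2, one_mul]
    · intro y hy
      rw [ht2, Finset.mem_filter] at hy
      refine ⟨(w2 : ZMod n) * (y - (b : ZMod n)), ?_, ?_⟩
      · rw [ht1, Finset.mem_filter]
        refine ⟨Finset.mem_univ _, ?_⟩
        set x : ZMod n := (w2 : ZMod n) * (y - (b : ZMod n)) with hx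
        have hyx : 2*(a : ZMod n)*x + (b : ZMod n) = y := by
          rw [hx, show 2*(a : ZMod n)*((w2 : ZMod n)*(y - (b : ZMod n)))
            = ((w2 : ZMod n)*(2*(a : ZMod n)))*(y - (b : ZMod n)) from by ring, hinv2, one_mul]
          ring
        have hiden : 4*(a : ZMod n)*((a : ZMod n)*x^2 + (b : ZMod n)*x + (c : ZMod n))
            = (2*(a : ZMod n)*x + (b : ZMod n))^2 - ((D : ℤ) : ZMod n) := by
          rw [hDcast]; ring
        calc (a : ZMod n)*x^2 + (b : ZMod n)*x + (c : ZMod n)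
            = (w4 : ZMod n) * (4*(a : ZMod n)*((a : ZMod n)*x^2 + (b : ZMod n)*x + (c : ZMod n))) := by
              rw [show (w4 : ZMod n) * (4*(a : ZMod n)*((a : ZMod n)*x^2 + (b : ZMod n)*x + (c : ZMod n)))
                = ((w4 : ZMod n) * (4*(a : ZMod n)))*((a : ZMod n)*x^2 + (b : ZMod n)*x + (c : ZMod n)) from by ring,
                hinv4, one_mul]
          _ = (w4 : ZMod n) * ((2*(a : ZMod n)*x + (b : ZMod n))^2 - ((D : ℤ) : ZMod n)) := by rw [hiden]
          _ = (w4 : ZMod n) * (y^2 - ((D : ℤ) : ZMod n)) := by rw [hyx]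
          _ = 0 := by rw [hy.2, sub_self, mul_zero]
      · show 2*(a : ZMod n)*((w2 : ZMod n)*(y - (b : ZMod n))) + (b : ZMod n) = y
        rw [show 2*(a : ZMod n)*((w2 : ZMod n)*(y - (b : ZMod n)))
          = ((w2 : ZMod n)*(2*(a : ZMod n)))*(y - (b : ZMod n)) from by ring, hinv2, one_mul]
        ring
  -- Step D : product counts t2
  have hstep3 : ((Finset.range 2) ×ˢ (Finset.range (p^k))).card = t2.card := by
    have hpkZ : ((p^k : ℕ) : ℤ) = (p:ℤ)^k := by push_cast; ring
    obtain ⟨q0, hq0⟩ := id hz0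
    refine Finset.card_bij (fun q _ =>
      (((if q.1 = 0 then (1:ℤ) else -1) * (p:ℤ)^k * z0 + (p:ℤ)^(k+m) * (q.2:ℤ) : ℤ) : ZMod n)) ?_ ?_ ?_
    · rintro ⟨ε, w⟩ hq
      rw [ht2, Finset.mem_filter]
      refine ⟨Finset.mem_univ _, ?_⟩
      rw [← Int.cast_pow, ← sub_eq_zero, ← Int.cast_sub, castdvd, hN]
      refine ⟨q0 + 2*(if ε = 0 then (1:ℤ) else -1)*z0*(w:ℤ) + (p:ℤ)^m*(w:ℤ)^2, ?_⟩
      have hz2 : z0^2 = d + (p:ℤ)^m * q0 := by linarith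
      by_cases hε : ε = 0
      · rw [if_pos hε]
        linear_combination ((p:ℤ)^(k+k)) * hz2 + hDd
      · rw [if_neg hε]
        linear_combination ((p:ℤ)^(k+k)) * hz2 + hDd
    · rintro ⟨ε, w⟩ hq ⟨ε', w'⟩ hq' hcast
      rw [Finset.mem_product, Finset.mem_range, Finset.mem_range] at hq hq'
      obtain ⟨hε2, hw⟩ := hq
      obtain ⟨hε2', hw'⟩ := hq'
      have hwZ : (w:ℤ) < (p:ℤ)^k := by rw [← hpkZ]; exact_mod_cast hw
      have hwZ' : (w':ℤ) < (p:ℤ)^k := by rw [← hpkZ]; exact_mod_cast hw'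
      have hw0 : (0:ℤ) ≤ (w:ℤ) := Int.natCast_nonneg w
      have hw0' : (0:ℤ) ≤ (w':ℤ) := Int.natCast_nonneg w'
      have same : ∀ (s : ℤ),
          N ∣ (s*(p:ℤ)^k*z0 + (p:ℤ)^(k+m)*(w:ℤ)) - (s*(p:ℤ)^k*z0 + (p:ℤ)^(k+m)*(w':ℤ)) →
          w = w' := by
        intro s hs
        obtain ⟨t, ht⟩ := hs
        rw [hN] at ht
        have hcanc : (p:ℤ)^(k+m) * ((w:ℤ) - (w':ℤ)) = (p:ℤ)^(k+m) * ((p:ℤ)^k * t) := by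
          linear_combination ht
        have h2 := mul_left_cancel₀ (pow_ne_zero (k+m) hppos.ne') hcanc
        have habs : (w:ℤ) - (w':ℤ) = 0 := by
          refine Int.eq_zero_of_abs_lt_dvd ⟨t, h2⟩ ?_
          rw [abs_lt]
          constructor <;> linarith
        have : (w:ℤ) = (w':ℤ) := by linarith
        exact_mod_cast this
      have opp : ∀ (z1 : ℤ), ¬ (p:ℤ) ∣ z1 →
          ¬ N ∣ ((p:ℤ)^k*(2*z1) + (p:ℤ)^(k+m)*((w:ℤ) - (w':ℤ))) := by
        intro z1 hz1 hdd
        have h1 : (p:ℤ)^(k+1) ∣ (p:ℤ)^k*(2*z1) + (p:ℤ)^(k+m)*((w:ℤ) - (w':ℤ)) :=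
          (pow_dvd_pow (p:ℤ) (by omega : k+1 ≤ (k+k)+m)).trans (hN ▸ hdd)
        have h2 : (p:ℤ)^(k+1) ∣ (p:ℤ)^(k+m)*((w:ℤ) - (w':ℤ)) :=
          Dvd.dvd.mul_right (pow_dvd_pow _ (by omega : k+1 ≤ k+m)) _
        have h3 : (p:ℤ)^k*(p:ℤ) ∣ (p:ℤ)^k*(2*z1) := by
          have hsub := dvd_sub h1 h2
          rw [add_sub_cancel_right] at hsub
          rwa [pow_succ] at hsub
        have h4 : (p:ℤ) ∣ 2*z1 := (mul_dvd_mul_iff_left (pow_ne_zero k hppos.ne')).1 h3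
        rcases hpZ.dvd_mul.1 h4 with h' | h'
        exacts [hp2 h', hz1 h']
      have hdvd := (casteq _ _).1 hcast
      interval_cases ε <;> interval_cases ε'
      · simp only [Prod.mk.injEq]
        exact ⟨trivial, same _ hdvd⟩
      · exfalso
        refine opp z0 hpz0 ?_
        rw [show (p:ℤ)^k*(2*z0) + (p:ℤ)^(k+m)*((w:ℤ) - (w':ℤ))
          = ((if (0:ℕ) = 0 then (1:ℤ) else -1)*(p:ℤ)^k*z0 + (p:ℤ)^(k+m)*(w:ℤ))
            - ((if (1:ℕ) = 0 then (1:ℤ) else -1)*(p:ℤ)^k*z0 + (p:ℤ)^(k+m)*(w':ℤ)) from by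
          rw [if_pos rfl, if_neg one_ne_zero]; ring]
        exact hdvd
      · exfalso
        refine opp (-z0) (fun h => hpz0 (dvd_neg.1 h)) ?_
        rw [show (p:ℤ)^k*(2*(-z0)) + (p:ℤ)^(k+m)*((w:ℤ) - (w':ℤ))
          = ((if (1:ℕ) = 0 then (1:ℤ) else -1)*(p:ℤ)^k*z0 + (p:ℤ)^(k+m)*(w:ℤ))
            - ((if (0:ℕ) = 0 then (1:ℤ) else -1)*(p:ℤ)^k*z0 + (p:ℤ)^(k+m)*(w':ℤ)) from by
          rw [if_pos rfl, if_neg one_ne_zero]; ring]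
        exact hdvd
      · simp only [Prod.mk.injEq]
        exact ⟨trivial, same _ hdvd⟩
    · intro y hy
      rw [ht2, Finset.mem_filter] at hy
      set Y : ℤ := (y.val : ℤ) with hY
      have hdvdY : N ∣ Y^2 - D := by
        rw [← castdvd, Int.cast_sub, Int.cast_pow, hY, castY, hy.2, sub_self]
      have hp2kD : ((p:ℤ)^k)^2 ∣ D := ⟨d, by rw [← hDd]; ring⟩
      have hp2kY : ((p:ℤ)^k)^2 ∣ Y^2 := by
        have h1 : ((p:ℤ)^k)^2 ∣ Y^2 - D := by
          refine dvd_trans ?_ hdvdY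
          rw [hN, show ((p:ℤ)^k)^2 = (p:ℤ)^(k+k) from by ring]
          exact pow_dvd_pow _ (by omega)
        have h2 := dvd_add h1 hp2kD
        simpa using h2
      obtain ⟨z, hz⟩ := (Int.pow_dvd_pow_iff (two_ne_zero)).1 hp2kY
      obtain ⟨t, ht⟩ := id hdvdY
      rw [hN] at ht
      have hcanc : (p:ℤ)^(k+k) * (z^2 - d) = (p:ℤ)^(k+k) * ((p:ℤ)^m * t) := by
        linear_combination ht - (Y + (p:ℤ)^k*z)*hz - hDd
      have hzd : (p:ℤ)^m ∣ z^2 - d :=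
        ⟨t, mul_left_cancel₀ (pow_ne_zero (k+k) hppos.ne') hcanc⟩
      have h0W : ∀ W : ℤ, 0 ≤ W % (p:ℤ)^k := fun W => Int.emod_nonneg W (pow_ne_zero k hppos.ne')
      have hltW : ∀ W : ℤ, W % (p:ℤ)^k < (p:ℤ)^k := fun W => Int.emod_lt_of_pos W (pow_pos hppos k)
      rcases aux_two_sols hp hp2 hpd hm1 hz0 hzd with hcase | hcase
      · obtain ⟨W, hW⟩ := hcase
        set w : ℕ := (W % (p:ℤ)^k).toNat with hwdef
        have hwcast : ((w:ℕ):ℤ) = W % (p:ℤ)^k := Int.toNat_of_nonneg (h0W W)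
        have hwlt : w < p^k := by
          have hh : ((w:ℕ):ℤ) < ((p^k:ℕ):ℤ) := by rw [hwcast, hpkZ]; exact hltW W
          exact_mod_cast hh
        refine ⟨(0, w), ?_, ?_⟩
        · rw [Finset.mem_product, Finset.mem_range, Finset.mem_range]
          exact ⟨by norm_num, hwlt⟩
        · show (((if (0:ℕ) = 0 then (1:ℤ) else -1) * (p:ℤ)^k * z0 + (p:ℤ)^(k+m) * ((w:ℕ):ℤ) : ℤ) : ZMod n) = y
          rw [if_pos rfl, ← castY y, ← hY, casteq]
          refine ⟨-(W / (p:ℤ)^k), ?_⟩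
          rw [hN, hz, show z = z0 + (p:ℤ)^m * W from by linarith]
          have hWw : (w:ℤ) - W = -((p:ℤ)^k * (W/(p:ℤ)^k)) := by
            rw [hwcast, Int.emod_def]; ring
          linear_combination ((p:ℤ)^(k+m)) * hWw
      · obtain ⟨W, hW⟩ := hcase
        set w : ℕ := (W % (p:ℤ)^k).toNat with hwdef
        have hwcast : ((w:ℕ):ℤ) = W % (p:ℤ)^k := Int.toNat_of_nonneg (h0W W)
        have hwlt : w < p^k := by
          have hh : ((w:ℕ):ℤ) < ((p^k:ℕ):ℤ) := by rw [hwcast, hpkZ]; exact hltW W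
          exact_mod_cast hh
        refine ⟨(1, w), ?_, ?_⟩
        · rw [Finset.mem_product, Finset.mem_range, Finset.mem_range]
          exact ⟨by norm_num, hwlt⟩
        · show (((if (1:ℕ) = 0 then (1:ℤ) else -1) * (p:ℤ)^k * z0 + (p:ℤ)^(k+m) * ((w:ℕ):ℤ) : ℤ) : ZMod n) = y
          rw [if_neg one_ne_zero, ← castY y, ← hY, casteq]
          refine ⟨-(W / (p:ℤ)^k), ?_⟩
          rw [hN, hz, show z = -z0 + (p:ℤ)^m * W from by linarith]
          have hWw : (w:ℤ) - W = -((p:ℤ)^k * (W/(p:ℤ)^k)) := by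
            rw [hwcast, Int.emod_def]; ring
          linear_combination ((p:ℤ)^(k+m)) * hWw
  rw [hstep1, hstep2, ← hstep3, Finset.card_product, Finset.card_range, Finset.card_range,
    show (k+k)/2 = k from by omega]
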